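/- arXiv:0810.3131 — 2 statements merged into one kernel-verified Lean document; each statement's English description precedes it below -/
import Mathlib

section
/- Let ℰ(ū) be a q-symmetric generating series (with free coefficient 1) whose coefficients ℰ(t̄_{m̄}) vanish unless the multi-index m̄ is admissible, and let 𝒟(ū) be its ⋆-inverse, 𝒟(ū) ⋆ ℰ(ū) = 1. Then the coefficients 𝒟(t̄_{k̄}) of 𝒟 are nonzero only if the multi-index k̄ is admissible, i.e. only if k_1 ≥ k_2 ≥ ⋯ ≥ k_{N−1} ≥ 0. -/
noncomputable section

open scoped TensorProduct
open MvPolynomial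

/-! ## Rational functions and the q-symmetrization machinery -/

variable (K : Type) [Field K] (ι : Type)

/-- The field `K(t)` of rational functions in the variables `t_i`, `i : ι`. -/
abbrev RatF := FractionRing (MvPolynomial ι K)

/-- The variable `t_i` as a rational function. -/
def tvar (i : ι) : RatF K ι := algebraMap (MvPolynomial ι K) (RatF K ι) (X i)

/-- A scalar `c : K` as a constant rational function. -/
def cst (c : K) : RatF K ι := algebraMap K (RatF K ι) c

/-- Substitution of variables `t_i ↦ t_{f i}` along an injective map `f`, as a `K`-algebra
endomorphism of the field of rational functions. -/
def renHom (f : ι → ι) (hf : Function.Injective f) : RatF K ι →ₐ[K] RatF K ι :=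
  IsFractionRing.liftAlgHom (R := K)
    (g := (IsScalarTower.toAlgHom K (MvPolynomial ι K) (RatF K ι)).comp (rename f))
    ((IsFractionRing.injective _ _).comp (rename_injective f hf))

variable (A : Type) [Ring A] [Algebra K A]

/-- The algebra `A(t) = A ⊗_K K(t)` of `A`-valued rational functions. -/
abbrev AVal := A ⊗[K] RatF K ι

/-- The embedding `K(t) → A(t)`. -/
def inF : RatF K ι →ₐ[K] AVal K ι A := Algebra.TensorProduct.includeRight

/-- Substitution of variables `t_i ↦ t_{f i}` on `A`-valued rational functions. -/
def renA (f : ι → ι) (hf : Function.Injective f) : AVal K ι A →ₐ[K] AVal K ι A :=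
  Algebra.TensorProduct.map (AlgHom.id K A) (renHom K ι f hf)

/-- Extension of a permutation of `Fin k` to a permutation of the whole variable index set `ι`
along an injective enumeration `v : Fin k → ι` of some of the variables. -/
def extPerm {k : ℕ} (v : Fin k → ι) (hv : Function.Injective v) (σ : Equiv.Perm (Fin k)) :
    Equiv.Perm ι :=
  letI := Classical.decPred (· ∈ Set.range v)
  σ.extendDomain (Equiv.ofInjective v hv)

variable (q : K)

/-- The elementary weight `w(t_i/t_j) = (q⁻¹ − q t_i/t_j)/(q − q⁻¹ t_i/t_j)`. -/
def wfac (i j : ι) : RatF K ι :=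
  (cst K ι q⁻¹ - cst K ι q * (tvar K ι i / tvar K ι j)) /
    (cst K ι q - cst K ι q⁻¹ * (tvar K ι i / tvar K ι j))

/-- The weight `∏_{ℓ<ℓ', σ(ℓ)>σ(ℓ')} w(t_{σ(ℓ')}/t_{σ(ℓ)})` of the operator `π(σ)` acting on
functions of the variables `t_{v 0}, …, t_{v (k-1)}`. -/
def qWeight {k : ℕ} (v : Fin k → ι) (σ : Equiv.Perm (Fin k)) : RatF K ι :=
  ∏ p ∈ Finset.univ.filter (fun p : Fin k × Fin k => p.1 < p.2 ∧ σ p.2 < σ p.1),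
    wfac K ι q (v (σ p.2)) (v (σ p.1))

/-- The operator `π(σ)`, `σ ∈ S_k`:
`π(σ)G = ∏_{ℓ<ℓ', σ(ℓ)>σ(ℓ')} w(t_{σ(ℓ')}/t_{σ(ℓ)}) ⬝ G(t_{σ(1)},…,t_{σ(k)})`, acting on `A`-valued
rational functions of the variables `t_{v 0}, …, t_{v (k-1)}`. -/
def piOp {k : ℕ} (v : Fin k → ι) (hv : Function.Injective v) (σ : Equiv.Perm (Fin k)) :
    AVal K ι A → AVal K ι A := fun G =>
  inF K ι A (qWeight K ι q v σ) * renA K ι A (extPerm ι v hv σ) (Equiv.injective _) G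

/-- The operator `π(σ_{i,j})` attached to a transposition:
`π(σ_{i,j})G = w(t_i/t_j) ⬝ (G with t_i, t_j interchanged)`.  For `j = i+1` this is the
operator `π(σ_{i,i+1})` of the paper. -/
def piElem (i j : ι) : AVal K ι A → AVal K ι A := fun G =>
  letI := Classical.decEq ι
  inF K ι A (wfac K ι q i j) * renA K ι A (Equiv.swap i j) (Equiv.injective _) G

/-- The `q`-symmetrization operator `Sym̄ = (1/k!) ∑_{σ ∈ S_k} π(σ)` over the variables
`t_{v 0}, …, t_{v (k-1)}`. -/
def qSym {k : ℕ} (v : Fin k → ι) (hv : Function.Injective v) :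
    AVal K ι A → AVal K ι A := fun G =>
  ((k.factorial : K))⁻¹ • ∑ σ : Equiv.Perm (Fin k), piOp K ι A q v hv σ G

/-! ## Multi-type generating series -/

/-- For the algebra with `N − 1` types of variables, the variables are `t^a_i`, indexed by
pairs `(a, i) : ℕ × ℕ` (the type `a` and the position `i`). -/
abbrev ιM : Type := ℕ × ℕ

/-- The enumeration of the first `m` variables of type `a`. -/
def vtype (a m : ℕ) : Fin m → ιM := fun i => (a, (i : ℕ))

theorem vtype_inj (a m : ℕ) : Function.Injective (vtype a m) := fun x y h =>
  Fin.val_injective (congrArg Prod.snd h)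

/-- The `q`-symmetrization over the variables `t̄_{n̄}`, applied independently to the variables
of each type: for each type `a` the first `n̄ a` variables of that type are `q`-symmetrized. -/
def symM (n : ℕ →₀ ℕ) : AVal K ιM A → AVal K ιM A :=
  (n.support.sort (· ≤ ·)).foldr
    (fun a F => (qSym K ιM A q (vtype a (n a)) (vtype_inj a (n a)) ∘ F)) id

/-- The shift of variables `t^a_i ↦ t^a_{i + s a}` (each type shifted by its own amount). -/
def shiftFun (s : ℕ → ℕ) : ιM → ιM := fun x => (x.1, x.2 + s x.1)

theorem shiftFun_inj (s : ℕ → ℕ) : Function.Injective (shiftFun s) := by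
  rintro ⟨a, i⟩ ⟨b, j⟩ h
  simp only [shiftFun, Prod.mk.injEq] at h
  obtain ⟨rfl, h2⟩ := h
  simp only [Prod.mk.injEq, true_and]
  omega

/-- The rational series `Z_{s̄}(t̄_{n̄})`. -/
def Zser (N : ℕ) (s n : ℕ →₀ ℕ) : RatF K ιM :=
  ∏ a ∈ Finset.range (N - 2), ∏ l ∈ Finset.Ico (s a) (n a), ∏ l' ∈ Finset.range (s (a + 1)),
    (cst K ιM q - cst K ιM q⁻¹ * (tvar K ιM (a, l) / tvar K ιM (a + 1, l'))) /
      (1 - tvar K ιM (a, l) / tvar K ιM (a + 1, l'))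

/-- A `q`-symmetric generating series in the parameters `u_1, …, u_{N-1}`: the family of its
coefficients `𝒜(t̄_{n̄})`, indexed by multi-indices `n̄` (finitely supported, and supported on
the types `1, …, N−1`, represented `0`-based as `{0, …, N−2}`); the coefficient `𝒜(t̄_{n̄})`
is an `A`-valued rational function depending only on the variables `t̄_{n̄}`, `q`-symmetric in
the variables of each type, and the free coefficient is `1`. -/
structure QSeriesM (N : ℕ) : Type where
  /-- The coefficient at `u_1^{n̄ 0} ⋯ u_{N-1}^{n̄ (N-2)}`. -/
  coeff : (ℕ →₀ ℕ) → AVal K ιM A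
  coeff_zero : coeff 0 = 1
  supp_types : ∀ n : ℕ →₀ ℕ, (¬ ∀ a, N - 1 ≤ a → n a = 0) → coeff n = 0
  qsymm : ∀ (n : ℕ →₀ ℕ) (a : ℕ) (σ : Equiv.Perm (Fin (n a))),
    piOp K ιM A q (vtype a (n a)) (vtype_inj a (n a)) σ (coeff n) = coeff n
  supp_vars : ∀ (n : ℕ →₀ ℕ) (f : ιM → ιM) (hf : Function.Injective f),
    (∀ a i, i < n a → f (a, i) = (a, i)) → renA K ιM A f hf (coeff n) = coeff n

/-- The coefficient at `u^{n̄}` of the `⋆`-product of two generating series given by their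
coefficient families:
`(𝒜⋆ℬ)(t̄_{n̄}) = ∑_{0̄ ≤ s̄ ≤ n̄} Sym̄_{t̄_{n̄}}( Z_{s̄}(t̄_{n̄}) ⬝ 𝒜(t̄_{(s̄,n̄]}) ⬝ ℬ(t̄_{(0̄,s̄]}) )`. -/
def starM (N : ℕ) (f g : (ℕ →₀ ℕ) → AVal K ιM A) (n : ℕ →₀ ℕ) : AVal K ιM A :=
  ∑ s ∈ Finset.Iic n,
    symM K A q n
      (inF K ιM A (Zser K q N s n) *
        (renA K ιM A (shiftFun (s ·)) (shiftFun_inj _) (f (n - s)) * g s))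

/-- The coefficients of the unit generating series `1`. -/
def oneM : (ℕ →₀ ℕ) → AVal K ιM A := fun n => if n = 0 then 1 else 0

/-- A multi-index is admissible if `n_1 ≥ n_2 ≥ ⋯`. -/
def Adm (n : ℕ →₀ ℕ) : Prop := ∀ a, n (a + 1) ≤ n a


theorem piOp_zero {k : ℕ} (v : Fin k → ι) (hv : Function.Injective v) (σ : Equiv.Perm (Fin k)) :
    piOp K ι A q v hv σ 0 = 0 := by
  simp [piOp]

theorem qSym_zero {k : ℕ} (v : Fin k → ι) (hv : Function.Injective v) :
    qSym K ι A q v hv 0 = 0 := by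
  simp [qSym, piOp_zero]

theorem qSym_fixed [CharZero K] {k : ℕ} (v : Fin k → ι) (hv : Function.Injective v)
    (G : AVal K ι A) (h : ∀ σ, piOp K ι A q v hv σ G = G) : qSym K ι A q v hv G = G := by
  unfold qSym
  simp only [h, Finset.sum_const, Finset.card_univ, Fintype.card_perm, Fintype.card_fin]
  rw [← Nat.cast_smul_eq_nsmul K, smul_smul, inv_mul_cancel₀, one_smul]
  exact_mod_cast k.factorial_ne_zero

theorem symM_zero (n : ℕ →₀ ℕ) : symM K A q n 0 = 0 := by
  unfold symM
  generalize (n.support.sort (· ≤ ·)) = l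
  induction l with
  | nil => rfl
  | cons a l ih =>
      simp only [List.foldr_cons, Function.comp_apply, ih]
      simp [qSym, piOp]

theorem symM_fixed [CharZero K] (n : ℕ →₀ ℕ) (G : AVal K ιM A)
    (h : ∀ a (σ : Equiv.Perm (Fin (n a))),
      piOp K ιM A q (vtype a (n a)) (vtype_inj a (n a)) σ G = G) :
    symM K A q n G = G := by
  unfold symM
  generalize (n.support.sort (· ≤ ·)) = l
  induction l with
  | nil => rfl
  | cons a l ih =>
      simp only [List.foldr_cons, Function.comp_apply, ih]
      exact qSym_fixed K ιM A q _ _ G (h a)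

/-- If the coefficients of a `q`-symmetric generating series `ℰ(ū)` vanish
unless the multi-index is admissible (`m_1 ≥ m_2 ≥ ⋯ ≥ m_{N−1} ≥ 0`), then the coefficients
of its `⋆`-inverse `𝒟(ū)` also vanish at all non-admissible multi-indices. -/
theorem star_inverse_admissible
    (K : Type) [Field K] [CharZero K] (q : K) (hq : q ≠ 0) (hq2 : q ^ 2 ≠ 1)
    (A : Type) [Ring A] [Algebra K A] (N : ℕ) (hN : 2 ≤ N) (SE : QSeriesM K A q N) (hE : ∀ n, ¬ Adm n → SE.coeff n = 0)
    (SD : QSeriesM K A q N) (hD : ∀ n, starM K A q N SD.coeff SE.coeff n = oneM K A n) :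
    ∀ n, ¬ Adm n → SD.coeff n = 0 := by
  classical
  suffices H : ∀ d (n : ℕ →₀ ℕ), (n.sum fun _ v => v) = d → ¬ Adm n → SD.coeff n = 0 from
    fun n hn => H _ n rfl hn
  intro d
  induction d using Nat.strong_induction_on with
  | _ d ih =>
    intro n hdeg hn
    have hn0 : n ≠ 0 := by
      rintro rfl
      exact hn fun a => by simp
    have hne := hD n
    simp only [starM] at hne
    have h0mem : (0 : ℕ →₀ ℕ) ∈ Finset.Iic n := Finset.mem_Iic.mpr (zero_le : (0 : ℕ →₀ ℕ) ≤ n)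
    rw [← Finset.add_sum_erase _ _ h0mem] at hne
    have hterm0 : symM K A q n
        (inF K ιM A (Zser K q N 0 n) *
          (renA K ιM A (shiftFun ((0 : ℕ →₀ ℕ) ·)) (shiftFun_inj _) (SD.coeff (n - 0)) *
            SE.coeff 0)) = SD.coeff n := by
      have hz : Zser K q N 0 n = 1 := by simp [Zser]
      have hren : renA K ιM A (shiftFun ((0 : ℕ →₀ ℕ) ·)) (shiftFun_inj _) (SD.coeff (n - 0))
          = SD.coeff n := by
        rw [tsub_zero]
        exact SD.supp_vars n _ _ (fun a i _ => by simp [shiftFun])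
      rw [hz, map_one, one_mul, hren, SE.coeff_zero, mul_one]
      exact symM_fixed K A q n _ (SD.qsymm n)
    have hrest : ∀ s ∈ (Finset.Iic n).erase 0, symM K A q n
        (inF K ιM A (Zser K q N s n) *
          (renA K ιM A (shiftFun (s ·)) (shiftFun_inj _) (SD.coeff (n - s)) * SE.coeff s)) = 0 := by
      intro s hs
      obtain ⟨hs0, hsn⟩ := Finset.mem_erase.mp hs
      have hsn' := Finset.mem_Iic.mp hsn
      have hle : ∀ a, s a ≤ n a := fun a => Finsupp.le_def.mp hsn' a
      by_cases hA : Adm s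
      · have hnadm : ¬ Adm (n - s) := by
          intro h
          obtain ⟨a, ha⟩ : ∃ a, ¬ n (a + 1) ≤ n a := not_forall.mp hn
          have h1 := h a
          have h2 := hA a
          have h3 := hle a
          have h4 := hle (a + 1)
          rw [Finsupp.tsub_apply, Finsupp.tsub_apply] at h1
          omega
        have hdlt : ((n - s).sum fun _ v => v) < d := by
          have hadd : (n - s) + s = n := tsub_add_cancel_of_le hsn'
          have hsum : ((n - s).sum fun _ v => v) + (s.sum fun _ v => v) = d := by
            rw [← Finsupp.sum_add_index' (fun _ => rfl) (fun _ _ _ => rfl), hadd, hdeg]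
          have hspos : 0 < s.sum fun _ v => v := by
            obtain ⟨a, ha⟩ := Finsupp.ne_iff.mp hs0
            have ha' : s a ≠ 0 := by simpa using ha
            rw [Finsupp.sum]
            exact Finset.sum_pos' (fun _ _ => Nat.zero_le _)
              ⟨a, Finsupp.mem_support_iff.mpr ha', Nat.pos_of_ne_zero ha'⟩
          omega
        rw [ih _ hdlt (n - s) rfl hnadm, map_zero, zero_mul, mul_zero, symM_zero]
      · rw [hE s hA, mul_zero, mul_zero, symM_zero]
    rw [Finset.sum_eq_zero hrest, add_zero, hterm0] at hne
    simpa [oneM, hn0] using hne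
end
end

section
/- The operators π(σ_{i,i+1}) satisfy the defining relations of the symmetric group: π(σ_{i,i+1})² = id, π(σ_{i,i+1}) π(σ_{i+1,i+2}) π(σ_{i,i+1}) = π(σ_{i+1,i+2}) π(σ_{i,i+1}) π(σ_{i+1,i+2}) for 1 ≤ i ≤ n−2, and π(σ_{i,i+1}) π(σ_{j,j+1}) = π(σ_{j,j+1}) π(σ_{i,i+1}) whenever |i − j| ≥ 2; consequently the assignment σ_{i,i+1} ↦ π(σ_{i,i+1}) extends to an action π of S_n on A(t_1,…,t_n) by K-linear operators, under which π(σ)G(t_1,…,t_n) = ∏_{ℓ<ℓ', σ(ℓ)>σ(ℓ')} ((q⁻¹ − q t_{σ(ℓ')}/t_{σ(ℓ)})/(q − q⁻¹ t_{σ(ℓ')}/t_{σ(ℓ)})) · G(t_{σ(1)},…,t_{σ(n)}). -/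
noncomputable section

open scoped TensorProduct
open MvPolynomial

/-! ## Rational functions and the q-symmetrization machinery -/

variable (K : Type) [Field K] (ι : Type)

variable (A : Type) [Ring A] [Algebra K A]

variable (q : K)

section Lemmas

variable {K : Type} [Field K] {ι : Type}

theorem renHom_algebraMap (f : ι → ι) (hf : Function.Injective f) (p : MvPolynomial ι K) :
    renHom K ι f hf (algebraMap (MvPolynomial ι K) (RatF K ι) p) =
      algebraMap (MvPolynomial ι K) (RatF K ι) (rename f p) := by
  unfold renHom
  exact IsFractionRing.lift_algebraMap (by exact (IsFractionRing.injective _ _).comp (rename_injective f hf)) p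

theorem renHom_tvar (f : ι → ι) (hf : Function.Injective f) (i : ι) :
    renHom K ι f hf (tvar K ι i) = tvar K ι (f i) := by
  rw [tvar, renHom_algebraMap, rename_X]; rfl

theorem renHom_cst (f : ι → ι) (hf : Function.Injective f) (c : K) :
    renHom K ι f hf (cst K ι c) = cst K ι c :=
  (renHom K ι f hf).commutes c

theorem renHom_wfac (q : K) (f : ι → ι) (hf : Function.Injective f) (i j : ι) :
    renHom K ι f hf (wfac K ι q i j) = wfac K ι q (f i) (f j) := by
  simp only [wfac, map_div₀, map_sub, map_mul, renHom_cst, renHom_tvar]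

end Lemmas
section Lemmas2

variable {K : Type} [Field K] {ι : Type}

theorem tvar_ne_zero (i : ι) : tvar K ι i ≠ 0 := by
  rw [tvar, Ne, map_eq_zero_iff _ (IsFractionRing.injective _ _)]
  exact X_ne_zero i

theorem cst_sub_cst_mul_ne_zero {c d : K} (hc : c ≠ 0) {i j : ι} (hij : i ≠ j) :
    cst K ι c - cst K ι d * (tvar K ι i / tvar K ι j) ≠ 0 := by
  classical
  intro h
  have hj := tvar_ne_zero (K := K) (ι := ι) j
  have h2 : cst K ι c * tvar K ι j = cst K ι d * tvar K ι i := by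
    field_simp at h
    linear_combination h
  have h3 : (C c * X j : MvPolynomial ι K) = C d * X i := by
    apply IsFractionRing.injective (MvPolynomial ι K) (RatF K ι)
    have e1 : cst K ι c = algebraMap (MvPolynomial ι K) (RatF K ι) (C c) := by
      rw [cst, IsScalarTower.algebraMap_apply K (MvPolynomial ι K) (RatF K ι)]
      rw [MvPolynomial.algebraMap_eq]
    have e2 : cst K ι d = algebraMap (MvPolynomial ι K) (RatF K ι) (C d) := by
      rw [cst, IsScalarTower.algebraMap_apply K (MvPolynomial ι K) (RatF K ι)]
      rw [MvPolynomial.algebraMap_eq]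
    simpa [map_mul, e1, e2, tvar] using h2
  have h4 := congrArg (MvPolynomial.coeff (Finsupp.single j 1)) h3
  rw [MvPolynomial.coeff_C_mul, MvPolynomial.coeff_C_mul, MvPolynomial.coeff_X,
    MvPolynomial.coeff_X'] at h4
  rw [if_neg (show ¬ (Finsupp.single i (1:ℕ) = Finsupp.single j 1) by rw [Finsupp.single_left_inj one_ne_zero]; exact hij)] at h4
  simp at h4
  exact hc h4

end Lemmas2
section Lemmas3

variable {K : Type} [Field K] {ι : Type}

theorem wfac_mul_wfac {q : K} (hq : q ≠ 0) {i j : ι} (hij : i ≠ j) :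
    wfac K ι q i j * wfac K ι q j i = 1 := by
  have hq' : q⁻¹ ≠ 0 := inv_ne_zero hq
  have hi := tvar_ne_zero (K := K) (ι := ι) i
  have hj := tvar_ne_zero (K := K) (ι := ι) j
  have d1 := cst_sub_cst_mul_ne_zero (K := K) (c := q) (d := q⁻¹) hq hij
  have d2 := cst_sub_cst_mul_ne_zero (K := K) (c := q) (d := q⁻¹) hq hij.symm
  have n1 := cst_sub_cst_mul_ne_zero (K := K) (c := q⁻¹) (d := q) hq' hij
  have n2 := cst_sub_cst_mul_ne_zero (K := K) (c := q⁻¹) (d := q) hq' hij.symm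
  rw [wfac, wfac, div_mul_div_comm, div_eq_one_iff_eq (mul_ne_zero d1 d2)]
  have hcq : cst K ι q⁻¹ = (cst K ι q)⁻¹ := map_inv₀ (algebraMap K (RatF K ι)) q
  have hcq0 : cst K ι q ≠ 0 := by
    simpa [cst, map_eq_zero_iff _ (algebraMap K (RatF K ι)).injective] using hq
  field_simp
  ring
end Lemmas3
section Lemmas4

variable {K : Type} [Field K] {ι : Type} {A : Type} [Ring A] [Algebra K A]

theorem renHom_comp_apply (f g : ι → ι) (hf : Function.Injective f)
    (hg : Function.Injective g) (x : RatF K ι) :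
    renHom K ι f hf (renHom K ι g hg x) = renHom K ι (f ∘ g) (hf.comp hg) x := by
  have : ((renHom K ι f hf).comp (renHom K ι g hg)).toRingHom =
      (renHom K ι (f ∘ g) (hf.comp hg)).toRingHom := by
    apply IsLocalization.ringHom_ext (nonZeroDivisors (MvPolynomial ι K))
    ext p <;>
      simp [RingHom.comp_apply, renHom_algebraMap, rename_rename]
  exact RingHom.congr_fun this x

theorem renHom_id_apply (hid : Function.Injective (id : ι → ι)) (x : RatF K ι) :
    renHom K ι id hid x = x := by
  have : (renHom K ι id hid).toRingHom = (AlgHom.id K (RatF K ι)).toRingHom := by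
    apply IsLocalization.ringHom_ext (nonZeroDivisors (MvPolynomial ι K))
    ext p <;> simp [RingHom.comp_apply, renHom_algebraMap]
  exact RingHom.congr_fun this x

theorem renA_inF (f : ι → ι) (hf : Function.Injective f) (w : RatF K ι) :
    renA K ι A f hf (inF K ι A w) = inF K ι A (renHom K ι f hf w) := by
  simp [renA, inF, Algebra.TensorProduct.map_tmul]

theorem renA_comp_apply (f g : ι → ι) (hf : Function.Injective f)
    (hg : Function.Injective g) (G : AVal K ι A) :
    renA K ι A f hf (renA K ι A g hg G) = renA K ι A (f ∘ g) (hf.comp hg) G := by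
  induction G using TensorProduct.induction_on with
  | zero => simp
  | tmul a w => simp [renA, Algebra.TensorProduct.map_tmul, renHom_comp_apply]
  | add x y hx hy => simp [map_add, hx, hy]

theorem renA_id_apply (hid : Function.Injective (id : ι → ι)) (G : AVal K ι A) :
    renA K ι A id hid G = G := by
  induction G using TensorProduct.induction_on with
  | zero => simp
  | tmul a w => simp [renA, Algebra.TensorProduct.map_tmul, renHom_id_apply]
  | add x y hx hy => simp [map_add, hx, hy]

end Lemmas4
section Lemmas5

variable {K : Type} [Field K] {n : ℕ}

theorem extPerm_id (hv : Function.Injective (id : Fin n → Fin n)) (σ : Equiv.Perm (Fin n)) :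
    extPerm (Fin n) id hv σ = σ := by
  ext x
  unfold extPerm
  rw [show x = ((Equiv.ofInjective (id : Fin n → Fin n) hv) x : Fin n) by
    simp [Equiv.ofInjective_apply]]
  rw [Equiv.Perm.extendDomain_apply_image]
  simp [Equiv.ofInjective_apply]

/-- Auxiliary form of the weight, as a product over all ordered pairs, in terms of the
inversions of `σ⁻¹`. -/
def Qw (q : K) (σ : Equiv.Perm (Fin n)) : RatF K (Fin n) :=
  ∏ p : Fin n × Fin n,
    if p.1 < p.2 ∧ σ⁻¹ p.2 < σ⁻¹ p.1 then wfac K (Fin n) q p.1 p.2 else 1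

theorem qWeight_eq_Qw (q : K) (σ : Equiv.Perm (Fin n)) :
    qWeight K (Fin n) q id σ = Qw q σ := by
  rw [qWeight, Finset.prod_filter, Qw]
  rw [← Equiv.prod_comp ((Equiv.prodComm (Fin n) (Fin n)).trans (Equiv.prodCongr σ σ))
      (fun p : Fin n × Fin n =>
        if p.1 < p.2 ∧ σ⁻¹ p.2 < σ⁻¹ p.1 then wfac K (Fin n) q p.1 p.2 else 1)]
  apply Finset.prod_congr rfl
  intro p _
  simp only [Equiv.trans_apply, Equiv.prodComm_apply, Equiv.prodCongr_apply,
    Prod.map_fst, Prod.map_snd, Prod.fst_swap, Prod.snd_swap,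
    (show ∀ x, σ⁻¹ (σ x) = x from fun x => Equiv.Perm.inv_eq_iff_eq.mpr rfl), id_eq]
  rw [if_congr and_comm rfl rfl]

theorem prod_pairs_split (f : Fin n × Fin n → RatF K (Fin n)) (hf : ∀ a, f (a, a) = 1) :
    ∏ p : Fin n × Fin n, f p =
      ∏ p ∈ Finset.univ.filter (fun p : Fin n × Fin n => p.1 < p.2),
        (f p * f (p.2, p.1)) := by
  rw [← Finset.prod_filter_mul_prod_filter_not Finset.univ
      (fun p : Fin n × Fin n => p.1 < p.2) f, Finset.prod_mul_distrib]
  congr 1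
  have step1 : ∏ p ∈ Finset.univ.filter (fun p : Fin n × Fin n => ¬ p.1 < p.2), f p =
      ∏ p ∈ Finset.univ.filter (fun p : Fin n × Fin n => p.2 < p.1), f p := by
    apply (Finset.prod_subset _ _).symm
    · intro p hp
      simp only [Finset.mem_filter, Finset.mem_univ, true_and] at hp ⊢
      exact lt_asymm hp
    · intro p hp hnp
      simp only [Finset.mem_filter, Finset.mem_univ, true_and, not_lt] at hp hnp
      have h12 : p.1 = p.2 := le_antisymm hnp hp
      rw [← Prod.mk.eta (p := p), h12]
      exact hf p.2
  rw [step1]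
  apply Finset.prod_nbij' (i := fun p : Fin n × Fin n => (p.2, p.1))
    (j := fun p : Fin n × Fin n => (p.2, p.1))
  · intro p hp
    simp only [Finset.mem_filter, Finset.mem_univ, true_and] at hp ⊢
    exact hp
  · intro p hp
    simp only [Finset.mem_filter, Finset.mem_univ, true_and] at hp ⊢
    exact hp
  · intro p _; rfl
  · intro p _; rfl
  · intro p _; rfl

end Lemmas5
section Lemmas6

variable {K : Type} [Field K] {n : ℕ}

theorem Qw_one (q : K) : Qw (n := n) q 1 = 1 := by
  rw [Qw]
  apply Finset.prod_eq_one
  intro p _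
  rw [if_neg]
  rintro ⟨h1, h2⟩
  simp only [inv_one, Equiv.Perm.coe_one, id_eq] at h2
  exact lt_asymm h1 h2

theorem renHom_Qw (q : K) (σ τ : Equiv.Perm (Fin n)) :
    renHom K (Fin n) σ σ.injective (Qw q τ) =
      ∏ p : Fin n × Fin n,
        if σ⁻¹ p.1 < σ⁻¹ p.2 ∧ τ⁻¹ (σ⁻¹ p.2) < τ⁻¹ (σ⁻¹ p.1)
          then wfac K (Fin n) q p.1 p.2 else 1 := by
  rw [Qw, map_prod]
  rw [← Equiv.prod_comp (Equiv.prodCongr σ σ : Fin n × Fin n ≃ Fin n × Fin n)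
      (fun p : Fin n × Fin n =>
        if σ⁻¹ p.1 < σ⁻¹ p.2 ∧ τ⁻¹ (σ⁻¹ p.2) < τ⁻¹ (σ⁻¹ p.1)
          then wfac K (Fin n) q p.1 p.2 else 1)]
  apply Finset.prod_congr rfl
  intro p _
  rw [apply_ite (renHom K (Fin n) σ σ.injective), map_one, renHom_wfac]
  simp only [Equiv.prodCongr_apply, Prod.map_fst, Prod.map_snd,
    (show ∀ x, σ⁻¹ (σ x) = x from fun x => Equiv.Perm.inv_eq_iff_eq.mpr rfl)]

theorem Qw_cocycle {q : K} (hq : q ≠ 0) (σ τ : Equiv.Perm (Fin n)) :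
    Qw q (σ * τ) = Qw q σ * renHom K (Fin n) σ σ.injective (Qw q τ) := by
  rw [renHom_Qw, Qw, Qw]
  simp only [mul_inv_rev, Equiv.Perm.mul_apply]
  rw [prod_pairs_split (K := K) _ (fun a => by simp),
    prod_pairs_split (K := K) (fun p => if p.1 < p.2 ∧ σ⁻¹ p.2 < σ⁻¹ p.1
      then wfac K (Fin n) q p.1 p.2 else 1) (fun a => by simp),
    prod_pairs_split (K := K) (fun p => if σ⁻¹ p.1 < σ⁻¹ p.2 ∧ τ⁻¹ (σ⁻¹ p.2) < τ⁻¹ (σ⁻¹ p.1)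
      then wfac K (Fin n) q p.1 p.2 else 1) (fun a => by simp),
    ← Finset.prod_mul_distrib]
  apply Finset.prod_congr rfl
  intro p hp
  simp only [Finset.mem_filter, Finset.mem_univ, true_and] at hp
  have hne : p.1 ≠ p.2 := ne_of_lt hp
  have h1 : ¬ p.2 < p.1 := lt_asymm hp
  have hsne : σ⁻¹ p.1 ≠ σ⁻¹ p.2 := fun h => hne (σ⁻¹.injective h)
  have hrne : τ⁻¹ (σ⁻¹ p.1) ≠ τ⁻¹ (σ⁻¹ p.2) :=
    fun h => hne (σ⁻¹.injective (τ⁻¹.injective h))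
  rcases hsne.lt_or_gt with hs | hs <;> rcases hrne.lt_or_gt with hr | hr
    <;> simp only [Equiv.Perm.inv_def] at hs hr
  · simp [hp, h1, lt_asymm hs, lt_asymm hr, hs, hr]
  · simp [hp, h1, lt_asymm hs, lt_asymm hr, hs, hr]
  · simp [hp, h1, lt_asymm hs, lt_asymm hr, hs, hr, wfac_mul_wfac hq hne]
  · simp [hp, h1, lt_asymm hs, lt_asymm hr, hs, hr]

end Lemmas6
section Lemmas7

variable {K : Type} [Field K] {A : Type} [Ring A] [Algebra K A] {n : ℕ}

theorem renA_congr {ι : Type} {f g : ι → ι} (h : f = g) {hf : Function.Injective f}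
    {hg : Function.Injective g} (G : AVal K ι A) :
    renA K ι A f hf G = renA K ι A g hg G := by
  subst h; rfl

theorem piOp_one (q : K) (G : AVal K (Fin n) A) :
    piOp K (Fin n) A q id Function.injective_id 1 G = G := by
  rw [piOp, qWeight_eq_Qw, Qw_one, map_one, one_mul]
  have hc : ⇑(extPerm (Fin n) id Function.injective_id (1 : Equiv.Perm (Fin n))) =
      (id : Fin n → Fin n) := by
    rw [extPerm_id]; rfl
  rw [renA_congr hc (hg := Function.injective_id)]
  exact renA_id_apply _ G

theorem piOp_mul {q : K} (hq : q ≠ 0) (σ τ : Equiv.Perm (Fin n)) (G : AVal K (Fin n) A) :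
    piOp K (Fin n) A q id Function.injective_id (σ * τ) G =
      piOp K (Fin n) A q id Function.injective_id σ
        (piOp K (Fin n) A q id Function.injective_id τ G) := by
  rw [piOp, piOp, piOp]
  have hc1 : ⇑(extPerm (Fin n) id Function.injective_id (σ * τ)) = ⇑(σ * τ) := by
    rw [extPerm_id]
  have hc2 : ⇑(extPerm (Fin n) id Function.injective_id σ) = ⇑σ := by rw [extPerm_id]
  have hc3 : ⇑(extPerm (Fin n) id Function.injective_id τ) = ⇑τ := by rw [extPerm_id]
  rw [renA_congr hc1 (hg := Equiv.injective (σ * τ)),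
    renA_congr hc2 (hg := Equiv.injective σ), renA_congr hc3 (hg := Equiv.injective τ),
    qWeight_eq_Qw, qWeight_eq_Qw, qWeight_eq_Qw, Qw_cocycle hq σ τ,
    map_mul (renA K (Fin n) A (⇑σ) (Equiv.injective σ)), renA_inF, renA_comp_apply,
    map_mul (inF K (Fin n) A), mul_assoc]
  rfl

theorem qWeight_swap (q : K) (a b : Fin n) (hab : (a : ℕ) + 1 = (b : ℕ)) :
    qWeight K (Fin n) q id (Equiv.swap a b) = wfac K (Fin n) q a b := by
  have hlt : a < b := by rw [Fin.lt_def]; omega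
  rw [qWeight]
  have hfilter : Finset.univ.filter (fun p : Fin n × Fin n =>
      p.1 < p.2 ∧ (Equiv.swap a b) p.2 < (Equiv.swap a b) p.1) = {(a, b)} := by
    ext ⟨x, y⟩
    simp only [Finset.mem_filter, Finset.mem_univ, true_and, Finset.mem_singleton,
      Prod.mk.injEq]
    constructor
    · rintro ⟨hxy, hs⟩
      rw [Equiv.swap_apply_def, Equiv.swap_apply_def] at hs
      rw [Fin.lt_def] at hxy
      split_ifs at hs <;>
        (simp only [Fin.ext_iff, Fin.lt_def] at *) <;> omega
    · rintro ⟨rfl, rfl⟩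
      refine ⟨hlt, ?_⟩
      rw [Equiv.swap_apply_left, Equiv.swap_apply_right]
      exact hlt
  rw [hfilter, Finset.prod_singleton]
  simp only [Equiv.swap_apply_left, Equiv.swap_apply_right, id_eq]

theorem piOp_swap (q : K) (a b : Fin n) (hab : (a : ℕ) + 1 = (b : ℕ))
    (G : AVal K (Fin n) A) :
    piOp K (Fin n) A q id Function.injective_id (Equiv.swap a b) G =
      piElem K (Fin n) A q a b G := by
  rw [piOp, piElem, qWeight_swap q a b hab]
  have hsw : @Equiv.swap (Fin n) (Classical.decEq (Fin n)) a b = Equiv.swap a b := by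
    congr!
  have hc : ⇑(extPerm (Fin n) id Function.injective_id (Equiv.swap a b)) =
      ⇑(@Equiv.swap (Fin n) (Classical.decEq (Fin n)) a b) := by
    rw [extPerm_id, hsw]
  rw [renA_congr hc (hg := Equiv.injective _)]

end Lemmas7
section Final

variable {K : Type} [Field K] {A : Type} [Ring A] [Algebra K A] {n : ℕ}

theorem braid_swap (a b c : Fin n) (hab : a ≠ b) (hbc : b ≠ c) (hac : a ≠ c) :
    Equiv.swap a b * Equiv.swap b c * Equiv.swap a b =
      Equiv.swap b c * Equiv.swap a b * Equiv.swap b c := by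
  have h1 : Equiv.swap ((Equiv.swap a b) b) ((Equiv.swap a b) c) =
      Equiv.swap a b * Equiv.swap b c * (Equiv.swap a b)⁻¹ :=
    Equiv.swap_apply_apply (Equiv.swap a b) b c
  have h2 : Equiv.swap ((Equiv.swap b c) a) ((Equiv.swap b c) b) =
      Equiv.swap b c * Equiv.swap a b * (Equiv.swap b c)⁻¹ :=
    Equiv.swap_apply_apply (Equiv.swap b c) a b
  rw [Equiv.swap_apply_right, Equiv.swap_apply_of_ne_of_ne hac.symm hbc.symm,
    Equiv.swap_inv] at h1
  rw [Equiv.swap_apply_of_ne_of_ne hab hac, Equiv.swap_apply_left, Equiv.swap_inv] at h2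
  exact h1.symm.trans h2

theorem commute_swap (a b c d : Fin n) (hca : c ≠ a) (hcb : c ≠ b) (hda : d ≠ a)
    (hdb : d ≠ b) :
    Equiv.swap a b * Equiv.swap c d = Equiv.swap c d * Equiv.swap a b := by
  have h1 : Equiv.swap ((Equiv.swap a b) c) ((Equiv.swap a b) d) =
      Equiv.swap a b * Equiv.swap c d * (Equiv.swap a b)⁻¹ :=
    Equiv.swap_apply_apply (Equiv.swap a b) c d
  rw [Equiv.swap_apply_of_ne_of_ne hca hcb, Equiv.swap_apply_of_ne_of_ne hda hdb,
    Equiv.swap_inv] at h1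
  have h2 : Equiv.swap a b * Equiv.swap c d * Equiv.swap a b = Equiv.swap c d := h1.symm
  calc Equiv.swap a b * Equiv.swap c d
      = (Equiv.swap a b * Equiv.swap c d * Equiv.swap a b) * Equiv.swap a b := by
        rw [mul_assoc, Equiv.swap_mul_self, mul_one]
    _ = Equiv.swap c d * Equiv.swap a b := by rw [h2]

end Final

/-- The operators `π(σ_{i,i+1})` satisfy the defining relations of the
symmetric group (involutivity, the braid relations, commutation at distance `≥ 2`);
consequently `σ_{i,i+1} ↦ π(σ_{i,i+1})` extends to an action `π` of `S_n` on `A(t_1,…,t_n)`,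
under which `π(σ)` is given by the explicit formula
`π(σ)G = ∏_{ℓ<ℓ', σ(ℓ)>σ(ℓ')} w(t_{σ(ℓ')}/t_{σ(ℓ)}) ⬝ G(t_{σ(1)},…,t_{σ(n)})`
(the operator `piOp`): the explicit operators agree with the elementary ones on
transpositions and define a group action. -/
theorem piElem_symmetric_group_action
    (K : Type) [Field K] [CharZero K] (q : K) (hq : q ≠ 0) (hq2 : q ^ 2 ≠ 1)
    (A : Type) [Ring A] [Algebra K A] (n : ℕ) :
    (∀ (i : ℕ) (h : i + 1 < n) (G : AVal K (Fin n) A),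
        piElem K (Fin n) A q ⟨i, Nat.lt_of_succ_lt h⟩ ⟨i + 1, h⟩
            (piElem K (Fin n) A q ⟨i, Nat.lt_of_succ_lt h⟩ ⟨i + 1, h⟩ G) = G) ∧
    (∀ (i : ℕ) (h : i + 2 < n) (G : AVal K (Fin n) A),
        piElem K (Fin n) A q ⟨i, by omega⟩ ⟨i + 1, by omega⟩
            (piElem K (Fin n) A q ⟨i + 1, by omega⟩ ⟨i + 2, h⟩
              (piElem K (Fin n) A q ⟨i, by omega⟩ ⟨i + 1, by omega⟩ G)) =
          piElem K (Fin n) A q ⟨i + 1, by omega⟩ ⟨i + 2, h⟩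
            (piElem K (Fin n) A q ⟨i, by omega⟩ ⟨i + 1, by omega⟩
              (piElem K (Fin n) A q ⟨i + 1, by omega⟩ ⟨i + 2, h⟩ G))) ∧
    (∀ (i j : ℕ) (hi : i + 1 < n) (hj : j + 1 < n), i + 2 ≤ j ∨ j + 2 ≤ i →
      ∀ G : AVal K (Fin n) A,
        piElem K (Fin n) A q ⟨i, Nat.lt_of_succ_lt hi⟩ ⟨i + 1, hi⟩
            (piElem K (Fin n) A q ⟨j, Nat.lt_of_succ_lt hj⟩ ⟨j + 1, hj⟩ G) =
          piElem K (Fin n) A q ⟨j, Nat.lt_of_succ_lt hj⟩ ⟨j + 1, hj⟩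
            (piElem K (Fin n) A q ⟨i, Nat.lt_of_succ_lt hi⟩ ⟨i + 1, hi⟩ G)) ∧
    (∀ (i : ℕ) (h : i + 1 < n) (G : AVal K (Fin n) A),
        piOp K (Fin n) A q id Function.injective_id
            (Equiv.swap ⟨i, Nat.lt_of_succ_lt h⟩ ⟨i + 1, h⟩) G =
          piElem K (Fin n) A q ⟨i, Nat.lt_of_succ_lt h⟩ ⟨i + 1, h⟩ G) ∧
    (∀ (σ τ : Equiv.Perm (Fin n)) (G : AVal K (Fin n) A),
        piOp K (Fin n) A q id Function.injective_id (σ * τ) G =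
          piOp K (Fin n) A q id Function.injective_id σ
            (piOp K (Fin n) A q id Function.injective_id τ G)) := by
  refine ⟨?_, ?_, ?_, ?_, ?_⟩
  · intro i h G
    rw [← piOp_swap q _ _ rfl, ← piOp_swap q _ _ rfl, ← piOp_mul hq,
      Equiv.swap_mul_self, piOp_one]
  · intro i h G
    have hac : (⟨i, by omega⟩ : Fin n) ≠ ⟨i + 2, h⟩ := by simp [Fin.ext_iff]
    have hab : (⟨i, by omega⟩ : Fin n) ≠ ⟨i + 1, by omega⟩ := by simp [Fin.ext_iff]
    have hbc : (⟨i + 1, by omega⟩ : Fin n) ≠ ⟨i + 2, h⟩ := by simp [Fin.ext_iff]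
    rw [← piOp_swap q _ _ rfl, ← piOp_swap q _ _ rfl, ← piOp_swap q _ _ rfl,
      ← piOp_swap q _ _ rfl, ← piOp_swap q _ _ rfl, ← piOp_swap q _ _ rfl,
      ← piOp_mul hq, ← piOp_mul hq, ← piOp_mul hq, ← piOp_mul hq,
      braid_swap _ _ _ hab hbc hac]
  · intro i j hi hj hd G
    have hca : (⟨j, by omega⟩ : Fin n) ≠ ⟨i, by omega⟩ := by
      simp only [Ne, Fin.ext_iff]; omega
    have hcb : (⟨j, by omega⟩ : Fin n) ≠ ⟨i + 1, hi⟩ := by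
      simp only [Ne, Fin.ext_iff]; omega
    have hda : (⟨j + 1, hj⟩ : Fin n) ≠ ⟨i, by omega⟩ := by
      simp only [Ne, Fin.ext_iff]; omega
    have hdb : (⟨j + 1, hj⟩ : Fin n) ≠ ⟨i + 1, hi⟩ := by
      simp only [Ne, Fin.ext_iff]; omega
    rw [← piOp_swap q _ _ rfl, ← piOp_swap q _ _ rfl, ← piOp_swap q _ _ rfl,
      ← piOp_swap q _ _ rfl, ← piOp_mul hq, ← piOp_mul hq,
      commute_swap _ _ _ _ hca hcb hda hdb]
  · intro i h G
    exact piOp_swap q _ _ rfl G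
  · intro σ τ G
    exact piOp_mul hq σ τ G
end
end
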